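/- Spread order implies higher tail integrals of the payoff: let μ ⪰_sp μ' mean two distributions G, G' on [0,1] satisfy G(a) ≥ G'(a) for a ≤ 1/2 and G(a) ≤ G'(a) for a > 1/2, with equal means. Then for any cutoff c ∈ (0, 1/2], ∫_{c}^{1} (2μ − 1) dG(μ) ≥ ∫_{c}^{1} (2μ − 1) dG'(μ), and for any cutoff c ∈ [1/2, 1), ∫_{c}^{1} (2μ − 1) dG(μ) ≥ ∫_{c}^{1} (2μ − 1) dG'(μ). -/

import Mathlib

open MeasureTheory



open MeasureTheory Set Filter Topology

namespace SpreadAux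

variable (F : StieltjesFunction ℝ)

lemma tendsto_bot (h0 : ∀ a < (0:ℝ), F a = 0) : Tendsto F atBot (𝓝 0) := by
  apply Tendsto.congr' _ tendsto_const_nhds
  filter_upwards [eventually_lt_atBot (0:ℝ)] with a ha
  exact (h0 a ha).symm

lemma tendsto_top (h1 : ∀ a ≥ (1:ℝ), F a = 1) : Tendsto F atTop (𝓝 1) := by
  apply Tendsto.congr' _ tendsto_const_nhds
  filter_upwards [eventually_ge_atTop (1:ℝ)] with a ha
  exact (h1 a ha).symm

lemma F_nonneg (h0 : ∀ a < (0:ℝ), F a = 0) (s : ℝ) : 0 ≤ F s := by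
  have h : min s 0 - 1 < 0 := by have := min_le_right s 0; linarith
  have h2 := F.mono (show min s 0 - 1 ≤ s by have := min_le_left s 0; linarith)
  rwa [h0 _ h] at h2

lemma F_le_one (h1 : ∀ a ≥ (1:ℝ), F a = 1) (s : ℝ) : F s ≤ 1 := by
  rcases le_total s 1 with h | h
  · have h2 := F.mono h; rwa [h1 1 le_rfl] at h2
  · exact le_of_eq (h1 s h)

lemma measure_univ' (h0 : ∀ a < (0:ℝ), F a = 0) (h1 : ∀ a ≥ (1:ℝ), F a = 1) :
    F.measure univ = 1 := by
  rw [F.measure_univ (tendsto_bot F h0) (tendsto_top F h1), sub_zero, ENNReal.ofReal_one]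

lemma measure_Ioi' (h0 : ∀ a < (0:ℝ), F a = 0) (h1 : ∀ a ≥ (1:ℝ), F a = 1) (s : ℝ) :
    F.measure (Ioi s) = ENNReal.ofReal (1 - F s) := by
  have hIic : F.measure (Iic s) = ENNReal.ofReal (F s) := by
    rw [F.measure_Iic (tendsto_bot F h0), sub_zero]
  have hcompl : Ioi s = (Iic s)ᶜ := compl_Iic.symm
  rw [hcompl, measure_compl measurableSet_Iic (by rw [hIic]; exact ENNReal.ofReal_ne_top),
    measure_univ' F h0 h1, hIic, ← ENNReal.ofReal_one,
    ← ENNReal.ofReal_sub _ (F_nonneg F h0 s)]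

lemma leftLim_zero (h0 : ∀ a < (0:ℝ), F a = 0) : Function.leftLim F 0 = 0 := by
  have h1 : Tendsto F (𝓝[<] (0:ℝ)) (𝓝 (Function.leftLim F 0)) := F.mono.tendsto_leftLim 0
  have h2 : Tendsto F (𝓝[<] (0:ℝ)) (𝓝 0) := by
    apply Tendsto.congr' _ tendsto_const_nhds
    filter_upwards [self_mem_nhdsWithin] with a ha
    exact (h0 a ha).symm
  exact tendsto_nhds_unique h1 h2

lemma measure_Iio_zero (h0 : ∀ a < (0:ℝ), F a = 0) : F.measure (Iio 0) = 0 := by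
  have hsplit : Iio (0:ℝ) = Iic (-1) ∪ Ioo (-1) 0 := by
    ext a; simp only [mem_Iio, mem_union, mem_Iic, mem_Ioo]
    constructor
    · intro h; rcases le_or_gt a (-1) with h' | h'
      · exact Or.inl h'
      · exact Or.inr ⟨h', h⟩
    · rintro (h | ⟨_, h⟩) <;> linarith
  have hIic : F.measure (Iic (-1)) = 0 := by
    rw [F.measure_Iic (tendsto_bot F h0), h0 (-1) (by norm_num), sub_zero, ENNReal.ofReal_zero]
  have hIoo : F.measure (Ioo (-1) 0) = 0 := by
    rw [F.measure_Ioo, leftLim_zero F h0, h0 (-1) (by norm_num), sub_zero, ENNReal.ofReal_zero]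
  rw [hsplit]
  exact le_antisymm ((measure_union_le _ _).trans (by rw [hIic, hIoo]; simp)) zero_le

lemma ae_nonneg (h0 : ∀ a < (0:ℝ), F a = 0) : ∀ᵐ a ∂F.measure, 0 ≤ a := by
  rw [ae_iff]
  have : {a : ℝ | ¬ 0 ≤ a} = Iio 0 := by ext a; simp [not_le]
  rw [this]; exact measure_Iio_zero F h0

lemma ae_le_one (h0 : ∀ a < (0:ℝ), F a = 0) (h1 : ∀ a ≥ (1:ℝ), F a = 1) :
    ∀ᵐ a ∂F.measure, a ≤ 1 := by
  rw [ae_iff]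
  have : {a : ℝ | ¬ a ≤ 1} = Ioi 1 := by ext a; simp [not_le]
  rw [this, measure_Ioi' F h0 h1, h1 1 le_rfl, sub_self, ENNReal.ofReal_zero]

open ENNReal in
/-- tail function -/
noncomputable def tl (s : ℝ) : ℝ≥0∞ := ENNReal.ofReal (1 - F s)

lemma tl_meas : Measurable (tl F) :=
  (measurable_const.sub F.mono.measurable).ennreal_ofReal

lemma measure_Ioi'' (h0 : ∀ a < (0:ℝ), F a = 0) (h1 : ∀ a ≥ (1:ℝ), F a = 1) (s : ℝ) :
    F.measure (Ioi s) = tl F s := measure_Ioi' F h0 h1 s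

/-- mean as tail integral -/
lemma M_eq (h0 : ∀ a < (0:ℝ), F a = 0) (h1 : ∀ a ≥ (1:ℝ), F a = 1) :
    ∫⁻ a, ENNReal.ofReal a ∂F.measure = ∫⁻ t in Ioi (0:ℝ), tl F t := by
  rw [lintegral_eq_lintegral_meas_lt F.measure (f := fun a => a) (ae_nonneg F h0) aemeasurable_id]
  apply setLIntegral_congr_fun measurableSet_Ioi
  intro t _
  beta_reduce
  have h : {a : ℝ | t < a} = Ioi t := rfl
  rw [h, measure_Ioi'' F h0 h1]

open ENNReal in
lemma M_ne_top (h0 : ∀ a < (0:ℝ), F a = 0) (h1 : ∀ a ≥ (1:ℝ), F a = 1) :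
    ∫⁻ t in Ioi (0:ℝ), tl F t ≠ ⊤ := by
  have hb : ∀ t ∈ Ioi (0:ℝ), tl F t ≤ (Ioc (0:ℝ) 1).indicator (fun _ => 1) t := by
    intro t ht
    rcases le_or_gt t 1 with h | h
    · have hm : t ∈ Ioc (0:ℝ) 1 := ⟨ht, h⟩
      rw [indicator_of_mem hm]
      unfold tl
      calc ENNReal.ofReal (1 - F t) ≤ ENNReal.ofReal 1 := by
            apply ENNReal.ofReal_le_ofReal
            have := F_nonneg F h0 t; linarith
        _ = 1 := ENNReal.ofReal_one
    · have hm : t ∉ Ioc (0:ℝ) 1 := by simp [mem_Ioc]; intro; linarith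
      rw [indicator_of_notMem hm]
      unfold tl
      rw [h1 t h.le, sub_self, ENNReal.ofReal_zero]
  have hle := setLIntegral_mono (μ := volume) (measurable_const.indicator measurableSet_Ioc) hb
  apply ne_top_of_le_ne_top _ hle
  rw [lintegral_indicator measurableSet_Ioc]
  simp

open ENNReal in
/-- change of variables -/
lemma cv (g : ℝ → ℝ≥0∞) (hg : Measurable g) (c : ℝ) :
    ∫⁻ t in Ioi (0:ℝ), g (c + t / 2) = 2 * ∫⁻ s in Ioi c, g s := by
  have hφ : Measurable (fun t : ℝ => c + t / 2) := by fun_prop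
  have hind : ∀ t : ℝ, (Ioi (0:ℝ)).indicator (fun t => g (c + t / 2)) t
      = (Ioi c).indicator g (c + t / 2) := by
    intro t
    rcases lt_or_ge 0 t with h | h
    · rw [indicator_of_mem (show t ∈ Ioi (0:ℝ) from h), indicator_of_mem (by simp only [mem_Ioi]; linarith)]
    · rw [indicator_of_notMem (by simpa using h),
        indicator_of_notMem (by simp only [mem_Ioi, not_lt]; linarith)]
  have hmap : volume.map (fun t : ℝ => c + t / 2) = (2:ℝ≥0∞) • volume := by
    have hcomp : (fun t : ℝ => c + t / 2) = (fun x : ℝ => c + x) ∘ (fun t : ℝ => 2⁻¹ * t) := by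
      funext t; simp only [Function.comp]; ring
    rw [hcomp, ← Measure.map_map (measurable_const_add c) (measurable_const_mul _),
      Real.map_volume_mul_left (by norm_num : (2⁻¹:ℝ) ≠ 0), Measure.map_smul,
      map_add_left_eq_self volume c]
    norm_num
  calc ∫⁻ t in Ioi (0:ℝ), g (c + t / 2)
      = ∫⁻ t, (Ioi (0:ℝ)).indicator (fun t => g (c + t / 2)) t := by
        rw [lintegral_indicator measurableSet_Ioi]
    _ = ∫⁻ t, (Ioi c).indicator g (c + t / 2) := by simp_rw [hind]
    _ = ∫⁻ s, (Ioi c).indicator g s ∂(volume.map (fun t : ℝ => c + t / 2)) :=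
        (lintegral_map (hg.indicator measurableSet_Ioi) hφ).symm
    _ = 2 * ∫⁻ s in Ioi c, g s := by
        rw [hmap, lintegral_smul_measure, lintegral_indicator measurableSet_Ioi, smul_eq_mul]


open ENNReal in
lemma N_eq (h0 : ∀ a < (0:ℝ), F a = 0) (h1 : ∀ a ≥ (1:ℝ), F a = 1) {c : ℝ} (hc : 0 < c) :
    ∫⁻ a in Ici c, ENNReal.ofReal (2 * (a - c)) ∂F.measure = 2 * ∫⁻ s in Ioi c, tl F s := by
  have nn : 0 ≤ᵐ[F.measure.restrict (Ici c)] fun a => 2 * (a - c) := by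
    filter_upwards [ae_restrict_mem measurableSet_Ici] with a ha
    have : c ≤ a := ha
    simp only [Pi.zero_apply]; linarith
  rw [lintegral_eq_lintegral_meas_lt _ nn (by fun_prop), ← cv (tl F) (tl_meas F) c]
  apply setLIntegral_congr_fun measurableSet_Ioi
  intro t ht
  beta_reduce
  have htpos : (0:ℝ) < t := ht
  have hset : {a : ℝ | t < 2 * (a - c)} = Ioi (c + t / 2) := by
    ext a; simp only [mem_setOf_eq, mem_Ioi]; constructor <;> intro <;> linarith
  rw [hset, Measure.restrict_apply measurableSet_Ioi,
    inter_eq_self_of_subset_left (fun a ha => by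
      have : c + t / 2 < a := ha
      exact mem_Ici.mpr (by linarith))]
  exact measure_Ioi'' F h0 h1 _

open ENNReal in
lemma N_ne_top (h0 : ∀ a < (0:ℝ), F a = 0) (h1 : ∀ a ≥ (1:ℝ), F a = 1) (c : ℝ) :
    ∫⁻ a in Ici c, ENNReal.ofReal (2 * (a - c)) ∂F.measure ≠ ⊤ := by
  haveI : IsProbabilityMeasure F.measure := ⟨measure_univ' F h0 h1⟩
  haveI : IsFiniteMeasure (F.measure.restrict (Ici c)) :=
    ⟨by rw [Measure.restrict_apply_univ]; exact measure_lt_top _ _⟩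
  have hb : ∀ᵐ a ∂F.measure.restrict (Ici c), ENNReal.ofReal (2 * (a - c)) ≤
      ENNReal.ofReal (2 * (1 - c)) := by
    filter_upwards [ae_restrict_of_ae (ae_le_one F h0 h1)] with a ha
    exact ENNReal.ofReal_le_ofReal (by linarith)
  have hle := lintegral_mono_ae hb
  apply ne_top_of_le_ne_top _ hle
  rw [lintegral_const]
  exact ENNReal.mul_ne_top ENNReal.ofReal_ne_top (measure_ne_top _ _)

lemma leftLim_le_one (h1 : ∀ a ≥ (1:ℝ), F a = 1) (c : ℝ) : Function.leftLim F c ≤ 1 :=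
  le_trans (F.mono.leftLim_le le_rfl) (F_le_one F h1 c)

lemma leftLim_nonneg (h0 : ∀ a < (0:ℝ), F a = 0) {c : ℝ} (hc : 0 < c) :
    0 ≤ Function.leftLim F c :=
  le_trans (F_nonneg F h0 (c / 2)) (F.mono.le_leftLim (by linarith))

open ENNReal in
/-- Main formula : tail integral decomposition. -/
lemma tail_formula (h0 : ∀ a < (0:ℝ), F a = 0) (h1 : ∀ a ≥ (1:ℝ), F a = 1)
    {c : ℝ} (hc : 0 < c) (hc1 : c < 1) :
    ∫ a in Ici c, (2 * a - 1) ∂F.measure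
      = (2 * c - 1) * (1 - Function.leftLim F c)
        + (∫⁻ a in Ici c, ENNReal.ofReal (2 * (a - c)) ∂F.measure).toReal := by
  haveI : IsProbabilityMeasure F.measure := ⟨measure_univ' F h0 h1⟩
  haveI : IsFiniteMeasure (F.measure.restrict (Ici c)) :=
    ⟨by rw [Measure.restrict_apply_univ]; exact measure_lt_top _ _⟩
  have hint : Integrable (fun a => 2 * (a - c)) (F.measure.restrict (Ici c)) := by
    apply Integrable.mono' (integrable_const (2 * (1 - c) + 2 * c))
    · exact (Continuous.aestronglyMeasurable (by fun_prop) :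
        AEStronglyMeasurable (fun a : ℝ => 2 * (a - c)) _)
    · filter_upwards [ae_restrict_mem measurableSet_Ici, ae_restrict_of_ae (ae_le_one F h0 h1)]
        with a ha ha1
      have hca : c ≤ a := ha
      rw [Real.norm_eq_abs, abs_of_nonneg (by linarith)]
      linarith
  have hsplit : (fun a : ℝ => 2 * a - 1) = fun a : ℝ => (2 * c - 1) + 2 * (a - c) := by
    funext a; ring
  rw [hsplit, integral_add (integrable_const _) hint, integral_const,
    integral_eq_lintegral_of_nonneg_ae (by
      filter_upwards [ae_restrict_mem measurableSet_Ici] with a ha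
      have hca : c ≤ a := ha
      simp only [Pi.zero_apply]; linarith)
      ((Continuous.aestronglyMeasurable (by fun_prop) :
        AEStronglyMeasurable (fun a : ℝ => 2 * (a - c)) _))]
  congr 1
  rw [measureReal_def, Measure.restrict_apply_univ, F.measure_Ici (tendsto_top F h1),
    ENNReal.toReal_ofReal (by linarith [leftLim_le_one F h1 c]), smul_eq_mul, mul_comm]

lemma leftLim_mono_pair (G G' : StieltjesFunction ℝ) {c : ℝ}
    (h : ∀ᶠ a in 𝓝[<] c, G' a ≤ G a) :
    Function.leftLim G' c ≤ Function.leftLim G c :=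
  le_of_tendsto_of_tendsto (G'.mono.tendsto_leftLim c) (G.mono.tendsto_leftLim c) h

end SpreadAux


open SpreadAux in
/-- If the posterior distribution `G` is more spread out around `1/2` than `G'`
(single crossing of CDFs at `1/2`), both are supported on `[0,1]` with equal means,
then for every cutoff `c ∈ (0,1)` the tail integral of the payoff `2μ − 1` is
weakly larger under `G` than under `G'`. -/
theorem spread_order_tail_integral (G G' : StieltjesFunction ℝ)
    (hG0 : ∀ a < (0:ℝ), G a = 0) (hG1 : ∀ a ≥ (1:ℝ), G a = 1)
    (hG'0 : ∀ a < (0:ℝ), G' a = 0) (hG'1 : ∀ a ≥ (1:ℝ), G' a = 1)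
    (hsp₁ : ∀ a ≤ (1/2 : ℝ), G a ≥ G' a)
    (hsp₂ : ∀ a > (1/2 : ℝ), G a ≤ G' a)
    (hmean : ∫ μ, μ ∂G.measure = ∫ μ, μ ∂G'.measure) :
    ∀ c ∈ Set.Ioo (0:ℝ) 1,
      ∫ μ in Set.Ici c, (2 * μ - 1) ∂G.measure ≥
        ∫ μ in Set.Ici c, (2 * μ - 1) ∂G'.measure := by
  rintro c ⟨hc0, hc1⟩
  rw [ge_iff_le, tail_formula G' hG'0 hG'1 hc0 hc1, tail_formula G hG0 hG1 hc0 hc1]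
  have hlim_le_one := leftLim_le_one G hG1 c
  have hlim'_le_one := leftLim_le_one G' hG'1 c
  have hlim_nonneg := leftLim_nonneg G hG0 hc0
  have hlim'_nonneg := leftLim_nonneg G' hG'0 hc0
  rcases le_or_gt c (1/2) with hhalf | hhalf
  · -- leftLim comparison
    have hL : Function.leftLim G' c ≤ Function.leftLim G c := by
      apply leftLim_mono_pair
      filter_upwards [self_mem_nhdsWithin] with a ha
      exact hsp₁ a (le_of_lt (lt_of_lt_of_le ha hhalf))
    -- mean equality as tail lintegrals
    have hM : ∫⁻ t in Set.Ioi (0:ℝ), tl G t = ∫⁻ t in Set.Ioi (0:ℝ), tl G' t := by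
      have e1 := integral_eq_lintegral_of_nonneg_ae (ae_nonneg G hG0)
        (aestronglyMeasurable_id (μ := G.measure))
      have e2 := integral_eq_lintegral_of_nonneg_ae (ae_nonneg G' hG'0)
        (aestronglyMeasurable_id (μ := G'.measure))
      rw [e1, e2] at hmean
      rw [M_eq G hG0 hG1, M_eq G' hG'0 hG'1] at hmean
      exact (ENNReal.toReal_eq_toReal_iff' (M_ne_top G hG0 hG1) (M_ne_top G' hG'0 hG'1)).mp hmean
    have hdecompG : ∫⁻ t in Set.Ioi (0:ℝ), tl G t
        = (∫⁻ t in Set.Ioc (0:ℝ) c, tl G t) + ∫⁻ t in Set.Ioi c, tl G t := by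
      rw [← Set.Ioc_union_Ioi_eq_Ioi hc0.le,
        lintegral_union measurableSet_Ioi (Set.Ioc_disjoint_Ioi le_rfl)]
    have hdecompG' : ∫⁻ t in Set.Ioi (0:ℝ), tl G' t
        = (∫⁻ t in Set.Ioc (0:ℝ) c, tl G' t) + ∫⁻ t in Set.Ioi c, tl G' t := by
      rw [← Set.Ioc_union_Ioi_eq_Ioi hc0.le,
        lintegral_union measurableSet_Ioi (Set.Ioc_disjoint_Ioi le_rfl)]
    have hlow : ∫⁻ s in Set.Ioc (0:ℝ) c, tl G s ≤ ∫⁻ s in Set.Ioc (0:ℝ) c, tl G' s := by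
      apply setLIntegral_mono (tl_meas G')
      intro s hs
      exact ENNReal.ofReal_le_ofReal (by have := hsp₁ s (le_trans hs.2 hhalf); linarith)
    have hlowfin : ∫⁻ s in Set.Ioc (0:ℝ) c, tl G s ≠ ⊤ :=
      ne_top_of_le_ne_top (M_ne_top G hG0 hG1)
        (lintegral_mono_set Set.Ioc_subset_Ioi_self)
    have hNkey : ∫⁻ s in Set.Ioi c, tl G' s ≤ ∫⁻ s in Set.Ioi c, tl G s := by
      have h2 : (∫⁻ t in Set.Ioc (0:ℝ) c, tl G t) + ∫⁻ t in Set.Ioi c, tl G' t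
          ≤ (∫⁻ t in Set.Ioc (0:ℝ) c, tl G t) + ∫⁻ t in Set.Ioi c, tl G t := by
        calc (∫⁻ t in Set.Ioc (0:ℝ) c, tl G t) + ∫⁻ t in Set.Ioi c, tl G' t
            ≤ (∫⁻ t in Set.Ioc (0:ℝ) c, tl G' t) + ∫⁻ t in Set.Ioi c, tl G' t :=
              add_le_add hlow le_rfl
          _ = (∫⁻ t in Set.Ioc (0:ℝ) c, tl G t) + ∫⁻ t in Set.Ioi c, tl G t := by
              rw [← hdecompG, ← hdecompG', hM]
      exact (ENNReal.add_le_add_iff_left hlowfin).mp h2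
    have hN : (∫⁻ a in Set.Ici c, ENNReal.ofReal (2 * (a - c)) ∂G'.measure)
        ≤ ∫⁻ a in Set.Ici c, ENNReal.ofReal (2 * (a - c)) ∂G.measure := by
      rw [N_eq G hG0 hG1 hc0, N_eq G' hG'0 hG'1 hc0]
      exact mul_le_mul_right hNkey 2
    exact add_le_add
      (mul_le_mul_of_nonpos_left (by linarith) (by linarith))
      ((ENNReal.toReal_le_toReal (N_ne_top G' hG'0 hG'1 c) (N_ne_top G hG0 hG1 c)).mpr hN)
  · have hL : Function.leftLim G c ≤ Function.leftLim G' c := by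
      apply leftLim_mono_pair
      filter_upwards [Ioo_mem_nhdsLT hhalf] with a ha
      exact hsp₂ a ha.1
    have hNkey : ∫⁻ s in Set.Ioi c, tl G' s ≤ ∫⁻ s in Set.Ioi c, tl G s := by
      apply setLIntegral_mono (tl_meas G)
      intro s hs
      exact ENNReal.ofReal_le_ofReal (by have := hsp₂ s (lt_trans hhalf hs); linarith)
    have hN : (∫⁻ a in Set.Ici c, ENNReal.ofReal (2 * (a - c)) ∂G'.measure)
        ≤ ∫⁻ a in Set.Ici c, ENNReal.ofReal (2 * (a - c)) ∂G.measure := by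
      rw [N_eq G hG0 hG1 hc0, N_eq G' hG'0 hG'1 hc0]
      exact mul_le_mul_right hNkey 2
    exact add_le_add
      (mul_le_mul_of_nonneg_left (by linarith) (by linarith))
      ((ENNReal.toReal_le_toReal (N_ne_top G' hG'0 hG'1 c) (N_ne_top G hG0 hG1 c)).mpr hN)
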